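/- If n ≥ 3, then μ(B) < 1/2 for every nearly orthogonal basis B of every well-rounded lattice L in ℝⁿ possessing a nearly orthogonal basis. If n = 2 and L is a well-rounded lattice in ℝ² with minimal norm 1 possessing a nearly orthogonal basis B, then μ(B) = 1/2 if and only if L is isometric to the hexagonal lattice span_ℤ{(1,0), (1/2, √3/2)}, and in that case μ(B) = 1/2 holds for every nearly orthogonal basis B of L. -/

import Mathlib

open scoped RealInnerProductSpace
open Submodule Metric MeasureTheory

noncomputable section

abbrev Evec (n : ℕ) := EuclideanSpace ℝ (Fin n)

/-- The lattice generated (over ℤ) by the vectors `b 0, …, b (n-1)`. -/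
def latticeOf {n : ℕ} (b : Fin n → Evec n) : Set (Evec n) :=
  {x | ∃ c : Fin n → ℤ, x = ∑ i, (c i : ℝ) • b i}

/-- The set of minimal vectors `S(L)` of a lattice `L`. -/
def minVecs {n : ℕ} (L : Set (Evec n)) : Set (Evec n) :=
  {x | x ∈ L ∧ x ≠ 0 ∧ ∀ y ∈ L, y ≠ 0 → ‖x‖ ≤ ‖y‖}

/-- `L` is well-rounded: its minimal vectors span `ℝⁿ`. -/
def IsWellRounded {n : ℕ} (L : Set (Evec n)) : Prop :=
  Submodule.span ℝ (minVecs L) = ⊤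

/-- `L` has minimal norm `m`. -/
def hasMinNorm {n : ℕ} (L : Set (Evec n)) (m : ℝ) : Prop :=
  (∃ x ∈ L, x ≠ 0 ∧ ‖x‖ = m) ∧ ∀ x ∈ L, x ≠ 0 → m ≤ ‖x‖

/-- The angle in `[0, π/2]` between a vector `v` and a subspace `V`,
whose cosine is `‖proj_V v‖ / ‖v‖`. -/
def subAngle {n : ℕ} (v : Evec n) (V : Submodule ℝ (Evec n)) : ℝ :=
  Real.arccos (‖(orthogonalProjection V v : Evec n)‖ / ‖v‖)

/-- The ordered basis `b` is weakly θ-orthogonal. -/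
def WeaklyOrth {n : ℕ} (θ : ℝ) (b : Fin n → Evec n) : Prop :=
  ∀ i : Fin n, 0 < (i : ℕ) →
    θ ≤ subAngle (b i) (Submodule.span ℝ (b '' {j | j < i}))

/-- The basis `b` is θ-orthogonal: every ordering of it is weakly θ-orthogonal. -/
def Orth {n : ℕ} (θ : ℝ) (b : Fin n → Evec n) : Prop :=
  ∀ σ : Equiv.Perm (Fin n), WeaklyOrth θ (b ∘ σ)

/-- A nearly orthogonal basis is a π/3-orthogonal basis. -/
def NearlyOrth {n : ℕ} (b : Fin n → Evec n) : Prop := Orth (Real.pi / 3) b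

/-- A weakly nearly orthogonal basis is a weakly π/3-orthogonal basis. -/
def WeaklyNearlyOrth {n : ℕ} (b : Fin n → Evec n) : Prop := WeaklyOrth (Real.pi / 3) b

/-- Coherence `C(L)` of a lattice. -/
def coherence {n : ℕ} (L : Set (Evec n)) : ℝ :=
  sSup {t | ∃ x ∈ minVecs L, ∃ y ∈ minVecs L, x ≠ y ∧ x ≠ -y ∧
    t = abs ⟪x, y⟫ / (‖x‖ * ‖y‖)}

/-- `μ(B)`: minimal absolute cosine of angles between distinct basis vectors. -/
def muB {n : ℕ} (b : Fin n → Evec n) : ℝ :=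
  sInf {t | ∃ i j : Fin n, i ≠ j ∧ t = abs ⟪b i, b j⟫ / (‖b i‖ * ‖b j‖)}

/-- `ν(B)`: maximal absolute cosine of angles between distinct basis vectors. -/
def nuB {n : ℕ} (b : Fin n → Evec n) : ℝ :=
  sSup {t | ∃ i j : Fin n, i ≠ j ∧ t = abs ⟪b i, b j⟫ / (‖b i‖ * ‖b j‖)}

/-- The determinant of the lattice with basis `b`. -/
def latDet {n : ℕ} (b : Fin n → Evec n) : ℝ :=
  |(Matrix.of fun i j : Fin n => b j i).det|

/-- Packing density of a lattice with basis `b` and minimal norm `m`: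
`ω_n · m^n / (2^n · det L)`. -/
def packDensity {n : ℕ} (m : ℝ) (b : Fin n → Evec n) : ℝ :=
  (volume (ball (0 : Evec n) 1)).toReal * m ^ n / (2 ^ n * latDet b)

/-- `L` is strongly eutactic. -/
def StronglyEutactic {n : ℕ} (L : Set (Evec n)) : Prop :=
  ∃ c : ℝ, 0 < c ∧ ∀ v : Evec n, ‖v‖ ^ 2 = c * ∑ᶠ x ∈ minVecs L, ⟪v, x⟫ ^ 2

/-- `L` is perfect: `{x xᵀ : x ∈ S(L)}` spans the symmetric `n × n` matrices. -/
def IsPerfect {n : ℕ} (L : Set (Evec n)) : Prop :=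
  ∀ A : Matrix (Fin n) (Fin n) ℝ, A.IsSymm →
    A ∈ Submodule.span ℝ ((fun x : Evec n => Matrix.of fun i j => x i * x j) '' minVecs L)

end

/-- The hexagonal lattice basis `{(1,0), (1/2, √3/2)}` in `ℝ²`. -/
noncomputable def hexBasis : Fin 2 → Evec 2 :=
  ![(WithLp.equiv 2 (Fin 2 → ℝ)).symm ![1, 0],
    (WithLp.equiv 2 (Fin 2 → ℝ)).symm ![1 / 2, Real.sqrt 3 / 2]]

section Aux

-- ### key projection lemma
lemma norm_proj_le {n : ℕ} (V : Submodule ℝ (Evec n)) (v : Evec n) :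
    ‖(orthogonalProjection V v : Evec n)‖ ≤ ‖v‖ := by
  calc ‖(orthogonalProjection V v : Evec n)‖
      ≤ ‖orthogonalProjection V‖ * ‖v‖ := (orthogonalProjection V).le_opNorm v
    _ ≤ 1 * ‖v‖ := by
        have := orthogonalProjection_norm_le V
        have : ‖orthogonalProjection V‖ * ‖v‖ ≤ 1 * ‖v‖ :=
          mul_le_mul_of_nonneg_right this (norm_nonneg v)
        exact this
    _ = ‖v‖ := one_mul _

lemma projKey {n : ℕ} {v e : Evec n} {V : Submodule ℝ (Evec n)}
    (he : e ∈ V) (h : Real.pi / 3 ≤ subAngle v V) :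
    |⟪v, e⟫| ≤ ‖v‖ * ‖e‖ / 2 := by
  set p : Evec n := (orthogonalProjection V v : Evec n) with hp
  have hproj : ‖p‖ ≤ ‖v‖ / 2 := by
    rcases eq_or_ne v 0 with rfl | hv
    · simp [hp]
    · have hv0 : (0:ℝ) < ‖v‖ := norm_pos_iff.mpr hv
      set t : ℝ := ‖p‖ / ‖v‖ with ht
      have ht0 : 0 ≤ t := div_nonneg (norm_nonneg _) (norm_nonneg _)
      have ht1 : t ≤ 1 := (div_le_one hv0).mpr (norm_proj_le V v)
      have hcos : Real.cos (Real.arccos t) ≤ Real.cos (Real.pi / 3) :=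
        Real.cos_le_cos_of_nonneg_of_le_pi (by positivity) (Real.arccos_le_pi t) h
      rw [Real.cos_arccos (by linarith) ht1, Real.cos_pi_div_three] at hcos
      rw [div_le_iff₀ hv0] at hcos
      linarith
  have hperp : ⟪v - p, e⟫ = 0 := V.starProjection_inner_eq_zero v e he
  have hinner : ⟪v, e⟫ = ⟪p, e⟫ := by
    have h2 : ⟪v, e⟫ - ⟪p, e⟫ = 0 := by rw [← inner_sub_left]; exact hperp
    linarith
  calc |⟪v, e⟫| = |⟪p, e⟫| := by rw [hinner]
    _ ≤ ‖p‖ * ‖e‖ := abs_real_inner_le_norm p e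
    _ ≤ (‖v‖ / 2) * ‖e‖ := mul_le_mul_of_nonneg_right hproj (norm_nonneg e)
    _ = ‖v‖ * ‖e‖ / 2 := by ring

-- ### pairwise bound from NearlyOrth
lemma pair_bound {n : ℕ} (hn : 2 ≤ n) {b : Fin n → Evec n} (hb : NearlyOrth b)
    {i j : Fin n} (hij : i ≠ j) : |⟪b i, b j⟫| ≤ ‖b i‖ * ‖b j‖ / 2 := by
  have h0 : (0:ℕ) < n := by omega
  set z : Fin n := ⟨0, by omega⟩ with hz
  set o : Fin n := ⟨1, by omega⟩ with ho
  have hzo : z ≠ o := by simp [hz, ho, Fin.ext_iff]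
  set τ : Equiv.Perm (Fin n) := Equiv.swap z j with hτ
  set i' : Fin n := τ i with hi'
  have hi'z : i' ≠ z := by
    intro hc
    have : τ i' = τ z := by rw [hc]
    rw [hi'] at this
    simp [hτ, Equiv.swap_apply_left] at this
    exact hij this
  set ρ : Equiv.Perm (Fin n) := Equiv.swap o i' with hρ
  set σ : Equiv.Perm (Fin n) := τ * ρ with hσ
  have hσo : (b ∘ σ) o = b i := by
    have : ρ o = i' := Equiv.swap_apply_left o i'
    simp only [Function.comp_apply, hσ, Equiv.Perm.mul_apply, this, hi', hτ]
    rw [Equiv.swap_apply_self]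
  have hσz : (b ∘ σ) z = b j := by
    have hz1 : ρ z = z := Equiv.swap_apply_of_ne_of_ne hzo (Ne.symm hi'z)
    simp only [Function.comp_apply, hσ, Equiv.Perm.mul_apply, hz1, hτ, Equiv.swap_apply_left]
  have hW := hb σ o (by simp [ho])
  have hmem : b j ∈ Submodule.span ℝ ((b ∘ σ) '' {l | l < o}) := by
    apply Submodule.subset_span
    exact ⟨z, by simp [hz, ho, Fin.lt_def], hσz⟩
  have := projKey hmem (by rw [hσo] at hW; exact hW)
  exact this

lemma part1 {n : ℕ} (hn : 3 ≤ n) (b : Fin n → Evec n) (hli : LinearIndependent ℝ b)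
    (hno : NearlyOrth b) : muB b < 1 / 2 := by
  by_contra hcon
  push_neg at hcon
  set S := {t | ∃ i j : Fin n, i ≠ j ∧ t = abs ⟪b i, b j⟫ / (‖b i‖ * ‖b j‖)} with hS
  have hbdd : BddBelow S := by
    refine ⟨0, fun t ht => ?_⟩
    obtain ⟨i, j, -, rfl⟩ := ht
    positivity
  have hpos : ∀ i : Fin n, (0:ℝ) < ‖b i‖ := fun i => norm_pos_iff.mpr (hli.ne_zero i)
  have hhalf : ∀ i j : Fin n, i ≠ j → |⟪b i, b j⟫| = ‖b i‖ * ‖b j‖ / 2 := by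
    intro i j hij
    have hmem : |⟪b i, b j⟫| / (‖b i‖ * ‖b j‖) ∈ S := ⟨i, j, hij, rfl⟩
    have h1 : (1:ℝ)/2 ≤ |⟪b i, b j⟫| / (‖b i‖ * ‖b j‖) := le_trans hcon (csInf_le hbdd hmem)
    have h2 := pair_bound (by omega) hno hij
    have hprod : (0:ℝ) < ‖b i‖ * ‖b j‖ := mul_pos (hpos i) (hpos j)
    rw [div_le_div_iff₀ (by norm_num) hprod] at h1
    linarith
  set z : Fin n := ⟨0, by omega⟩ with hzdef
  set o : Fin n := ⟨1, by omega⟩ with hodef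
  set w : Fin n := ⟨2, by omega⟩ with hwdef
  have hzo : z ≠ o := by simp [hzdef, hodef, Fin.ext_iff]
  have hwz : w ≠ z := by simp [hwdef, hzdef, Fin.ext_iff]
  have hwo : w ≠ o := by simp [hwdef, hodef, Fin.ext_iff]
  set c0 := ⟪b w, b z⟫ with hc0
  set c1 := ⟪b w, b o⟫ with hc1
  set e0 : ℝ := if 0 ≤ c0 then 1 else -1 with he0
  set e1 : ℝ := if 0 ≤ c1 then 1 else -1 with he1
  have he0c : e0 * c0 = |c0| := by
    rcases le_or_gt 0 c0 with h | h
    · simp [he0, h, abs_of_nonneg h]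
    · simp [he0, not_le.mpr h, abs_of_neg h]
  have he1c : e1 * c1 = |c1| := by
    rcases le_or_gt 0 c1 with h | h
    · simp [he1, h, abs_of_nonneg h]
    · simp [he1, not_le.mpr h, abs_of_neg h]
  have he0sq : e0 * e0 = 1 := by rcases le_or_gt 0 c0 with h | h <;> simp [he0, h, not_le.mpr]
  have he1sq : e1 * e1 = 1 := by rcases le_or_gt 0 c1 with h | h <;> simp [he1, h, not_le.mpr]
  have he0abs : |e0| = 1 := by rcases le_or_gt 0 c0 with h | h <;> simp [he0, h, not_le.mpr]
  have he1abs : |e1| = 1 := by rcases le_or_gt 0 c1 with h | h <;> simp [he1, h, not_le.mpr]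
  set u : Evec n := (e0 / ‖b z‖) • b z + (e1 / ‖b o‖) • b o with hu
  -- inner product of b w with u
  have hzne : ‖b z‖ ≠ 0 := (hpos z).ne'
  have hone : ‖b o‖ ≠ 0 := (hpos o).ne'
  have hinner : ⟪b w, u⟫ = ‖b w‖ := by
    rw [hu, inner_add_right, real_inner_smul_right, real_inner_smul_right, ← hc0, ← hc1]
    have hwz' := hhalf w z hwz
    have hwo' := hhalf w o hwo
    have e1' : e0 / ‖b z‖ * c0 = ‖b w‖ / 2 := by
      rw [div_mul_eq_mul_div, he0c, hwz']
      field_simp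
    have e2' : e1 / ‖b o‖ * c1 = ‖b w‖ / 2 := by
      rw [div_mul_eq_mul_div, he1c, hwo']
      field_simp
    rw [e1', e2']; ring
  -- norm of u
  have hxnorm : ‖(e0 / ‖b z‖) • b z‖ = 1 := by
    rw [norm_smul, Real.norm_eq_abs, abs_div, he0abs, abs_of_pos (hpos z)]
    field_simp
  have hynorm : ‖(e1 / ‖b o‖) • b o‖ = 1 := by
    rw [norm_smul, Real.norm_eq_abs, abs_div, he1abs, abs_of_pos (hpos o)]
    field_simp
  have hcrossval : |⟪(e0 / ‖b z‖) • b z, (e1 / ‖b o‖) • b o⟫| ≤ 1/2 := by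
    rw [real_inner_smul_left, real_inner_smul_right, abs_mul, abs_mul, abs_div, abs_div,
      he0abs, he1abs, abs_of_pos (hpos z), abs_of_pos (hpos o), hhalf z o hzo]
    rw [show (1:ℝ)/‖b z‖ * (1/‖b o‖ * (‖b z‖ * ‖b o‖ / 2)) = 1/2 by field_simp]
  have hnormu : ‖u‖ ^ 2 ≤ 3 := by
    have hexp : ‖u‖ ^ 2 = 1 + 2 * ⟪(e0 / ‖b z‖) • b z, (e1 / ‖b o‖) • b o⟫ + 1 := by
      rw [hu, @norm_add_sq_real, hxnorm, hynorm]
      ring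
    have := abs_le.mp hcrossval
    rw [hexp]
    linarith [this.2]
  -- u is in the span
  have hmemz : b z ∈ Submodule.span ℝ (b '' {l | l < w}) :=
    Submodule.subset_span ⟨z, by simp [hzdef, hwdef, Fin.lt_def], rfl⟩
  have hmemo : b o ∈ Submodule.span ℝ (b '' {l | l < w}) :=
    Submodule.subset_span ⟨o, by simp [hodef, hwdef, Fin.lt_def], rfl⟩
  have hmemu : u ∈ Submodule.span ℝ (b '' {l | l < w}) :=
    Submodule.add_mem _ (Submodule.smul_mem _ _ hmemz) (Submodule.smul_mem _ _ hmemo)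
  -- apply key with the identity permutation
  have hW := hno 1 w (by simp [hwdef])
  have hbσ : b ∘ (1 : Equiv.Perm (Fin n)) = b := by funext x; simp
  rw [hbσ] at hW
  have hkey := projKey hmemu hW
  rw [hinner, abs_of_pos (hpos w)] at hkey
  have hule : ‖u‖ < 2 := by nlinarith [norm_nonneg u]
  nlinarith [hpos w]

-- ### lattice membership lemmas
lemma mem_latticeOf_self {n : ℕ} (b : Fin n → Evec n) (i : Fin n) : b i ∈ latticeOf b := by
  refine ⟨fun j => if j = i then 1 else 0, ?_⟩
  simp [apply_ite, ite_smul, Finset.sum_ite_eq']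

lemma mem_latticeOf_two {b : Fin 2 → Evec 2} {x : Evec 2} :
    x ∈ latticeOf b ↔ ∃ p q : ℤ, x = (p:ℝ) • b 0 + (q:ℝ) • b 1 := by
  constructor
  · rintro ⟨c, rfl⟩
    exact ⟨c 0, c 1, by rw [Fin.sum_univ_two]⟩
  · rintro ⟨p, q, rfl⟩
    exact ⟨![p, q], by rw [Fin.sum_univ_two]; simp⟩

lemma norm_comb_sq (b : Fin 2 → Evec 2) (p q : ℝ) :
    ‖p • b 0 + q • b 1‖ ^ 2 =
      p ^ 2 * ‖b 0‖ ^ 2 + 2 * (p * q * ⟪b 0, b 1⟫) + q ^ 2 * ‖b 1‖ ^ 2 := by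
  rw [@norm_add_sq_real, norm_smul, norm_smul, real_inner_smul_left, real_inner_smul_right]
  simp only [Real.norm_eq_abs, mul_pow, sq_abs]
  ring

lemma minVecs_norm_one {L : Set (Evec 2)} (hmn : hasMinNorm L 1) {x : Evec 2}
    (hx : x ∈ minVecs L) : ‖x‖ = 1 := by
  obtain ⟨⟨w, hwL, hw0, hwn⟩, hall⟩ := hmn
  obtain ⟨hxL, hx0, hxmin⟩ := hx
  have h1 := hxmin w hwL hw0
  have h2 := hall x hxL hx0
  rw [hwn] at h1
  linarith

lemma b1_not_in_span_b0 {b : Fin 2 → Evec 2} (hli : LinearIndependent ℝ b) (i j : Fin 2)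
    (hij : i ≠ j) : b j ∉ Submodule.span ℝ ({b i} : Set (Evec 2)) := by
  intro hmem
  obtain ⟨a, ha⟩ := Submodule.mem_span_singleton.mp hmem
  have := Fintype.linearIndependent_iff.mp hli (fun k => if k = i then a else -1) ?_ j
  · rw [if_neg (Ne.symm hij)] at this; norm_num at this
  · have hsum : ∑ k, (if k = i then a else (-1:ℝ)) • b k
        = a • b i + (-1:ℝ) • b j ∨ ∑ k, (if k = i then a else (-1:ℝ)) • b k
        = (-1:ℝ) • b j + a • b i := by
      fin_cases i <;> fin_cases j <;> simp_all [Fin.sum_univ_two] <;> tauto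
    rcases hsum with h | h <;> rw [h, ha] <;> module

lemma norms_one {b : Fin 2 → Evec 2} (hli : LinearIndependent ℝ b)
    (hwr : IsWellRounded (latticeOf b)) (hmn : hasMinNorm (latticeOf b) 1)
    (hno : NearlyOrth b) : ‖b 0‖ = 1 ∧ ‖b 1‖ = 1 := by
  have hpos : ∀ i : Fin 2, (0:ℝ) < ‖b i‖ := fun i => norm_pos_iff.mpr (hli.ne_zero i)
  have hge : ∀ i : Fin 2, (1:ℝ) ≤ ‖b i‖ := fun i =>
    hmn.2 (b i) (mem_latticeOf_self b i) (hli.ne_zero i)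
  have hcos : |⟪b 0, b 1⟫| ≤ ‖b 0‖ * ‖b 1‖ / 2 := pair_bound le_rfl hno (by decide)
  -- key norm inequality
  have hkeyineq : ∀ p q : ℤ, p ≠ 0 → q ≠ 0 →
      ‖b 0‖ * ‖b 1‖ ≤ ‖(p:ℝ) • b 0 + (q:ℝ) • b 1‖ ^ 2 := by
    intro p q hp hq
    have hP : (1:ℝ) ≤ |(p:ℝ)| := by
      rw [← Int.cast_abs]; exact_mod_cast Int.one_le_abs (by omega)
    have hQ : (1:ℝ) ≤ |(q:ℝ)| := by
      rw [← Int.cast_abs]; exact_mod_cast Int.one_le_abs (by omega)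
    rw [norm_comb_sq]
    have habs : |(p:ℝ) * (q:ℝ) * ⟪b 0, b 1⟫| = |(p:ℝ)| * |(q:ℝ)| * |⟪b 0, b 1⟫| := by
      rw [abs_mul, abs_mul]
    have hna := neg_abs_le ((p:ℝ) * (q:ℝ) * ⟪b 0, b 1⟫)
    rw [habs] at hna
    have hsq := sq_nonneg (|(p:ℝ)| * ‖b 0‖ - |(q:ℝ)| * ‖b 1‖)
    have hp2 : (p:ℝ)^2 = |(p:ℝ)|^2 := (sq_abs _).symm
    have hq2 : (q:ℝ)^2 = |(q:ℝ)|^2 := (sq_abs _).symm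
    nlinarith [hpos 0, hpos 1, mul_pos (hpos 0) (hpos 1), abs_nonneg ⟪b 0, b 1⟫,
      mul_le_mul hP hQ (by norm_num) (abs_nonneg (p:ℝ))]
  -- minimal vectors with nonzero coordinates exist
  have hspan : Submodule.span ℝ (minVecs (latticeOf b)) = ⊤ := hwr
  have habs1 : ∀ m : ℤ, m ≠ 0 → (1:ℝ) ≤ |(m:ℝ)| := by
    intro m hm
    rw [← Int.cast_abs]; exact_mod_cast Int.one_le_abs hm
  have hd : ∀ i j : Fin 2, i ≠ j →
      (∃ x ∈ minVecs (latticeOf b), ∃ p q : ℤ,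
        x = (p:ℝ) • b i + (q:ℝ) • b j ∧ p ≠ 0) := by
    intro i j hij
    by_contra hcon
    push_neg at hcon
    have hsub : minVecs (latticeOf b) ⊆
        (Submodule.span ℝ ({b j} : Set (Evec 2)) : Set _) := by
      intro x hx
      obtain ⟨p, q, hpq⟩ := mem_latticeOf_two.mp hx.1
      apply Submodule.mem_span_singleton.mpr
      fin_cases i <;> fin_cases j
      · exact absurd rfl hij
      · have h0 : p = 0 := hcon x hx p q hpq
        refine ⟨(q:ℝ), ?_⟩
        rw [hpq, h0]
        push_cast
        rw [zero_smul, zero_add]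
      · have h0 : q = 0 := hcon x hx q p (by rw [hpq]; exact add_comm _ _)
        refine ⟨(p:ℝ), ?_⟩
        rw [hpq, h0]
        push_cast
        rw [zero_smul, add_zero]
      · exact absurd rfl hij
    have hle : Submodule.span ℝ (minVecs (latticeOf b)) ≤
        Submodule.span ℝ ({b j} : Set (Evec 2)) := Submodule.span_le.mpr hsub
    rw [hspan, top_le_iff] at hle
    exact b1_not_in_span_b0 hli j i hij.symm (hle ▸ Submodule.mem_top (x := b i))
  have step : ∀ i j : Fin 2, i ≠ j → ‖b i‖ = 1 ∨ (‖b 0‖ = 1 ∧ ‖b 1‖ = 1) := by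
    intro i j hij
    obtain ⟨x, hxmin, p, q, hxeq, hp⟩ := hd i j hij
    have hxn : ‖x‖ = 1 := minVecs_norm_one hmn hxmin
    by_cases hq : q = 0
    · left
      have hxi : ‖x‖ = |(p : ℝ)| * ‖b i‖ := by
        rw [hxeq, hq]
        push_cast
        rw [zero_smul, add_zero, norm_smul, Real.norm_eq_abs]
      have := habs1 p hp
      have := hge i
      nlinarith [hpos i]
    · right
      have hsq : ‖b 0‖ * ‖b 1‖ ≤ 1 := by
        have hkey' : ‖b 0‖ * ‖b 1‖ ≤ ‖x‖ ^ 2 := by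
          fin_cases i <;> fin_cases j
          · exact absurd rfl hij
          · rw [hxeq]; exact hkeyineq p q hp hq
          · rw [hxeq, show (⟨0, by norm_num⟩ : Fin 2) = 0 from rfl,
              show (⟨1, by norm_num⟩ : Fin 2) = 1 from rfl, add_comm]
            exact hkeyineq q p hq hp
          · exact absurd rfl hij
        rw [hxn] at hkey'; norm_num at hkey'; exact hkey'
      constructor <;> nlinarith [hge 0, hge 1, hpos 0, hpos 1]
  rcases step 0 1 (by decide) with h0 | hboth
  · rcases step 1 0 (by decide) with h1 | hboth
    · exact ⟨h0, h1⟩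
    · exact hboth
  · exact hboth

-- ### determinant machinery
noncomputable def latMat (b : Fin 2 → Evec 2) : Matrix (Fin 2) (Fin 2) ℝ := Matrix.of fun i j => b j i

lemma inner_coord (x y : Evec 2) : ⟪x, y⟫ = x 0 * y 0 + x 1 * y 1 := by
  simp [PiLp.inner_apply, RCLike.inner_apply, Fin.sum_univ_two]
  ring

lemma norm_sq_coord (x : Evec 2) : ‖x‖^2 = x 0^2 + x 1^2 := by
  rw [← real_inner_self_eq_norm_sq, inner_coord]
  ring

lemma latMat_det_sq (b : Fin 2 → Evec 2) :
    (latMat b).det ^ 2 = ‖b 0‖^2 * ‖b 1‖^2 - ⟪b 0, b 1⟫^2 := by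
  rw [Matrix.det_fin_two, norm_sq_coord, norm_sq_coord, inner_coord]
  simp only [latMat, Matrix.of_apply]
  ring

lemma latMat_det_ne_zero {v : Fin 2 → Evec 2} (hv : LinearIndependent ℝ v) :
    (latMat v).det ≠ 0 := by
  intro hdet
  obtain ⟨g, hg0, hgv⟩ := (Matrix.exists_mulVec_eq_zero_iff).mpr hdet
  have hsum : ∑ k, g k • v k = 0 := by
    ext i
    have := congrFun hgv i
    simp only [Matrix.mulVec, dotProduct, latMat, Matrix.of_apply] at this
    simpa [Finset.sum_apply, mul_comm] using this
  exact hg0 (funext (Fintype.linearIndependent_iff.mp hv g hsum))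

lemma exists_intMat {v w : Fin 2 → Evec 2} (hw : ∀ j, w j ∈ latticeOf v) :
    ∃ C : Matrix (Fin 2) (Fin 2) ℤ,
      latMat w = latMat v * C.map (Int.cast : ℤ → ℝ) := by
  choose c hc using fun j => (hw j)
  refine ⟨Matrix.of fun k j => c j k, ?_⟩
  ext i j
  rw [Matrix.mul_apply]
  simp only [latMat, Matrix.of_apply, Matrix.map_apply]
  rw [hc j]
  simp [Finset.sum_apply, mul_comm]

lemma det_sq_congr {v w : Fin 2 → Evec 2} (hv : LinearIndependent ℝ v)
    (h : latticeOf v = latticeOf w) : (latMat v).det ^ 2 = (latMat w).det ^ 2 := by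
  obtain ⟨C, hC⟩ := exists_intMat (v := v) (w := w)
    (fun j => h ▸ mem_latticeOf_self w j)
  obtain ⟨D, hD⟩ := exists_intMat (v := w) (w := v)
    (fun j => h.symm ▸ mem_latticeOf_self v j)
  have hvv : latMat v = latMat v * (C.map (Int.cast : ℤ → ℝ) * D.map Int.cast) := by
    rw [← Matrix.mul_assoc, ← hC, ← hD]
  have hdet : (latMat v).det = (latMat v).det * ((C.map (Int.cast : ℤ → ℝ)).det * (D.map Int.cast).det) := by
    conv_lhs => rw [hvv]
    rw [Matrix.det_mul, Matrix.det_mul]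
  have hCD : (C.map (Int.cast : ℤ → ℝ)).det * (D.map Int.cast).det = 1 := by
    rcases mul_right_eq_self₀.mp hdet.symm with h' | h'
    · exact h'
    · exact absurd h' (latMat_det_ne_zero hv)
  have e1 : ((C.det : ℝ)) = (C.map (Int.cast : ℤ → ℝ)).det := by
    have := RingHom.map_det (Int.castRingHom ℝ) C
    simpa [RingHom.mapMatrix_apply] using this
  have e2 : ((D.det : ℝ)) = (D.map (Int.cast : ℤ → ℝ)).det := by
    have := RingHom.map_det (Int.castRingHom ℝ) D
    simpa [RingHom.mapMatrix_apply] using this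
  have hCint : (C.det * D.det : ℤ) = 1 := by
    have : ((C.det : ℝ)) * ((D.det : ℝ)) = 1 := by rw [e1, e2]; exact hCD
    exact_mod_cast this
  have hC1 : C.det = 1 ∨ C.det = -1 :=
    Int.isUnit_iff.mp (IsUnit.of_mul_eq_one _ hCint)
  have hdetw : (latMat w).det = (latMat v).det * (C.map (Int.cast : ℤ → ℝ)).det := by
    rw [hC, Matrix.det_mul]
  rw [hdetw, mul_pow, ← e1]
  rcases hC1 with h' | h' <;> rw [h'] <;> norm_num

-- ### linear independence from determinant
lemma li_of_det_ne_zero {v : Fin 2 → Evec 2} (h : (latMat v).det ≠ 0) :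
    LinearIndependent ℝ v := by
  rw [Fintype.linearIndependent_iff]
  intro g hg
  by_contra hcon
  apply h
  rw [← Matrix.exists_mulVec_eq_zero_iff]
  refine ⟨g, fun hc => hcon (fun i => congrFun hc i), ?_⟩
  funext i
  simp only [Matrix.mulVec, dotProduct, latMat, Matrix.of_apply]
  have := congrArg (fun x : Evec 2 => x i) hg
  simpa [Finset.sum_apply, mul_comm] using this

-- ### image of a lattice under a linear isometry
lemma latticeOf_image {n : ℕ} (f : Evec n ≃ₗᵢ[ℝ] Evec n) (v : Fin n → Evec n) :
    f '' latticeOf v = latticeOf (⇑f ∘ v) := by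
  ext x
  constructor
  · rintro ⟨y, ⟨c, rfl⟩, rfl⟩
    exact ⟨c, by simp [map_sum, _root_.map_smul]⟩
  · rintro ⟨c, rfl⟩
    exact ⟨∑ i, (c i : ℝ) • v i, ⟨c, rfl⟩, by simp [map_sum, _root_.map_smul]⟩

-- ### hexagonal basis facts

lemma hex00 : hexBasis 0 0 = 1 := by simp [hexBasis]
lemma hex01 : hexBasis 0 1 = 0 := by simp [hexBasis]
lemma hex10 : hexBasis 1 0 = 1/2 := by simp [hexBasis]
lemma hex11 : hexBasis 1 1 = Real.sqrt 3 / 2 := by simp [hexBasis]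

lemma sqrt3_sq : Real.sqrt 3 * Real.sqrt 3 = 3 := Real.mul_self_sqrt (by norm_num)

lemma hex_inner_00 : ⟪hexBasis 0, hexBasis 0⟫ = 1 := by
  rw [inner_coord, hex00, hex01]; norm_num
lemma hex_inner_01 : ⟪hexBasis 0, hexBasis 1⟫ = 1/2 := by
  rw [inner_coord, hex00, hex01, hex10, hex11]; norm_num
lemma hex_inner_11 : ⟪hexBasis 1, hexBasis 1⟫ = 1 := by
  rw [inner_coord, hex10, hex11]
  have := sqrt3_sq
  nlinarith
lemma hex_norm_0 : ‖hexBasis 0‖ = 1 := by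
  have h := real_inner_self_eq_norm_sq (hexBasis 0)
  rw [hex_inner_00] at h
  nlinarith [norm_nonneg (hexBasis 0)]
lemma hex_norm_1 : ‖hexBasis 1‖ = 1 := by
  have h := real_inner_self_eq_norm_sq (hexBasis 1)
  rw [hex_inner_11] at h
  nlinarith [norm_nonneg (hexBasis 1)]

lemma hex_li : LinearIndependent ℝ hexBasis := by
  apply li_of_det_ne_zero
  rw [Matrix.det_fin_two]
  simp only [latMat, Matrix.of_apply, hex00, hex01, hex10, hex11]
  have h3 : 0 < Real.sqrt 3 := Real.sqrt_pos.mpr (by norm_num)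
  intro hc
  nlinarith

-- ### isometry construction
lemma exists_isometry {w : Fin 2 → Evec 2} (hw : LinearIndependent ℝ w)
    (h00 : ⟪w 0, w 0⟫ = 1) (h01 : ⟪w 0, w 1⟫ = 1/2) (h11 : ⟪w 1, w 1⟫ = 1) :
    ∃ f : Evec 2 ≃ₗᵢ[ℝ] Evec 2, ∀ i, f (hexBasis i) = w i := by
  have hcard : Fintype.card (Fin 2) = Module.finrank ℝ (Evec 2) := by
    simp [finrank_euclideanSpace_fin]
  set B : Module.Basis (Fin 2) ℝ (Evec 2) := basisOfLinearIndependentOfCardEqFinrank hex_li hcard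
    with hB
  set B' : Module.Basis (Fin 2) ℝ (Evec 2) := basisOfLinearIndependentOfCardEqFinrank hw hcard
    with hB'
  have hBc : ∀ i, B i = hexBasis i := fun i =>
    congrFun (coe_basisOfLinearIndependentOfCardEqFinrank hex_li hcard) i
  have hB'c : ∀ i, B' i = w i := fun i =>
    congrFun (coe_basisOfLinearIndependentOfCardEqFinrank hw hcard) i
  set e : Evec 2 ≃ₗ[ℝ] Evec 2 := B.equiv B' (Equiv.refl _) with he
  have heB : ∀ i, e (B i) = w i := by
    intro i
    rw [he, Module.Basis.equiv_apply, Equiv.refl_apply, hB'c]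
  have hGram : ∀ i j : Fin 2, ⟪w i, w j⟫ = ⟪hexBasis i, hexBasis j⟫ := by
    intro i j
    fin_cases i <;> fin_cases j <;>
      simp only [Fin.zero_eta, Fin.mk_one, Fin.isValue]
    · rw [h00, hex_inner_00]
    · rw [h01, hex_inner_01]
    · rw [real_inner_comm, h01, real_inner_comm (hexBasis _), hex_inner_01]
    · rw [h11, hex_inner_11]
  have hkey : ∀ x y : Evec 2, ⟪e x, e y⟫ = ⟪x, y⟫ := by
    intro x y
    conv_lhs => rw [← B.sum_repr x, ← B.sum_repr y]
    conv_rhs => rw [← B.sum_repr x, ← B.sum_repr y]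
    rw [map_sum, map_sum]
    simp only [_root_.map_smul, sum_inner, inner_sum, real_inner_smul_left,
      real_inner_smul_right]
    refine Finset.sum_congr rfl fun i _ => Finset.sum_congr rfl fun j _ => ?_
    rw [heB, heB, hBc, hBc, hGram]
  refine ⟨e.isometryOfInner hkey, fun i => ?_⟩
  have : (e.isometryOfInner hkey) (hexBasis i) = e (hexBasis i) := rfl
  rw [this, ← hBc, heB]

-- ### muB in dimension 2
lemma muB_two (b : Fin 2 → Evec 2) :
    muB b = |⟪b 0, b 1⟫| / (‖b 0‖ * ‖b 1‖) := by
  have hset : {t | ∃ i j : Fin 2, i ≠ j ∧ t = abs ⟪b i, b j⟫ / (‖b i‖ * ‖b j‖)}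
      = {|⟪b 0, b 1⟫| / (‖b 0‖ * ‖b 1‖)} := by
    ext t
    simp only [Set.mem_setOf_eq, Set.mem_singleton_iff]
    constructor
    · rintro ⟨i, j, hij, rfl⟩
      fin_cases i <;> fin_cases j
      · exact absurd rfl hij
      · rfl
      · rw [real_inner_comm, mul_comm]
        rfl
      · exact absurd rfl hij
    · rintro rfl
      exact ⟨0, 1, by decide, rfl⟩
  rw [muB, hset, csInf_singleton]

-- ### sign flip
lemma latticeOf_flip (b : Fin 2 → Evec 2) :
    latticeOf ![b 0, -b 1] = latticeOf b := by
  ext x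
  rw [mem_latticeOf_two, mem_latticeOf_two]
  constructor
  · rintro ⟨p, q, rfl⟩
    refine ⟨p, -q, ?_⟩
    push_cast
    rw [neg_smul, smul_neg]
  · rintro ⟨p, q, rfl⟩
    refine ⟨p, -q, ?_⟩
    push_cast
    rw [neg_smul, smul_neg, neg_neg]

lemma li_flip {b : Fin 2 → Evec 2} (hli : LinearIndependent ℝ b) :
    LinearIndependent ℝ ![b 0, -b 1] := by
  rw [Fintype.linearIndependent_iff] at hli ⊢
  intro g hg
  have : ∑ i, (![g 0, -g 1] : Fin 2 → ℝ) i • b i = 0 := by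
    rw [Fin.sum_univ_two] at hg ⊢
    simp only [Matrix.cons_val_zero, Matrix.cons_val_one, Matrix.head_cons] at hg ⊢
    rw [← hg]
    rw [smul_neg, neg_smul]
  have h2 := hli _ this
  intro i
  fin_cases i
  · simpa using h2 0
  · have := h2 1
    simp only [Matrix.cons_val_one, Matrix.head_cons, neg_eq_zero] at this
    simpa using this

lemma abs_eq_half {c : ℝ} (h : c^2 = (1/2)^2) : |c| = 1/2 := by
  have h2 : (|c| - 1/2) * (|c| + 1/2) = 0 := by nlinarith [sq_abs c]
  rcases mul_eq_zero.mp h2 with h' | h'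
  · linarith
  · nlinarith [abs_nonneg c]


end Aux

/-- for `n ≥ 3`, `μ(B) < 1/2` for every nearly orthogonal basis of a
well-rounded lattice; for `n = 2`, `μ(B) = 1/2` iff the lattice is (isometric to)
the hexagonal lattice, in which case it holds for every nearly orthogonal basis. -/
theorem stmt_6 :
    (∀ n : ℕ, 3 ≤ n → ∀ b : Fin n → Evec n, LinearIndependent ℝ b →
      IsWellRounded (latticeOf b) → NearlyOrth b → muB b < 1 / 2) ∧
    (∀ b : Fin 2 → Evec 2, LinearIndependent ℝ b →
      IsWellRounded (latticeOf b) → hasMinNorm (latticeOf b) 1 → NearlyOrth b →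
      ((muB b = 1 / 2 ↔
          ∃ f : Evec 2 ≃ₗᵢ[ℝ] Evec 2, latticeOf b = f '' latticeOf hexBasis) ∧
       (muB b = 1 / 2 → ∀ b' : Fin 2 → Evec 2, LinearIndependent ℝ b' →
          latticeOf b' = latticeOf b → NearlyOrth b' → muB b' = 1 / 2))) := by
  constructor
  · intro n hn b hli _hwr hno
    exact part1 hn b hli hno
  · intro b hli hwr hmn hno
    obtain ⟨hb0, hb1⟩ := norms_one hli hwr hmn hno
    set c : ℝ := ⟪b 0, b 1⟫ with hcdef
    have hmu : muB b = |c| := by rw [muB_two, hb0, hb1, ← hcdef]; norm_num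
    constructor
    · constructor
      · intro h12
        have habs : |c| = 1/2 := by rw [← hmu]; exact h12
        by_cases hsgn : 0 ≤ c
        · have hcval : c = 1/2 := by rwa [abs_of_nonneg hsgn] at habs
          obtain ⟨f, hf⟩ := exists_isometry hli
            (by rw [real_inner_self_eq_norm_sq, hb0]; norm_num)
            (by rw [← hcdef, hcval])
            (by rw [real_inner_self_eq_norm_sq, hb1]; norm_num)
          refine ⟨f, ?_⟩
          rw [latticeOf_image]
          have hfb : ⇑f ∘ hexBasis = b := funext fun i => hf i
          rw [hfb]
        · have hcval : c = -(1/2) := by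
            rw [abs_of_neg (not_le.mp hsgn)] at habs; linarith
          obtain ⟨f, hf⟩ := exists_isometry (li_flip hli)
            (by
              show ⟪b 0, b 0⟫ = 1
              rw [real_inner_self_eq_norm_sq, hb0]; norm_num)
            (by
              show ⟪b 0, -(b 1)⟫ = 1/2
              rw [inner_neg_right, ← hcdef, hcval]; norm_num)
            (by
              show ⟪-(b 1), -(b 1)⟫ = 1
              rw [inner_neg_neg, real_inner_self_eq_norm_sq, hb1]; norm_num)
          refine ⟨f, ?_⟩
          rw [latticeOf_image]
          have hfb : ⇑f ∘ hexBasis = ![b 0, -b 1] := funext fun i => hf i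
          rw [hfb, latticeOf_flip]
      · rintro ⟨f, hlat⟩
        rw [latticeOf_image] at hlat
        set w : Fin 2 → Evec 2 := ⇑f ∘ hexBasis with hwdef
        have hliw : LinearIndependent ℝ w := by
          have := hex_li.map' (f.toLinearEquiv.toLinearMap)
            (LinearMap.ker_eq_bot_of_injective f.injective)
          exact this
        have hdet := det_sq_congr hli hlat
        rw [latMat_det_sq, latMat_det_sq] at hdet
        have hw0 : ‖w 0‖ = 1 := by
          rw [hwdef, Function.comp_apply, f.norm_map, hex_norm_0]
        have hw1 : ‖w 1‖ = 1 := by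
          rw [hwdef, Function.comp_apply, f.norm_map, hex_norm_1]
        have hwi : ⟪w 0, w 1⟫ = 1/2 := by
          rw [hwdef, Function.comp_apply, Function.comp_apply,
            LinearIsometryEquiv.inner_map_map, hex_inner_01]
        rw [hb0, hb1, hw0, hw1, hwi] at hdet
        have hc2 : c^2 = (1/2)^2 := by rw [← hcdef] at hdet; nlinarith [hdet]
        rw [hmu, abs_eq_half hc2]
    · intro h12 b' hli' hlat' hno'
      have hwr' : IsWellRounded (latticeOf b') := by rw [hlat']; exact hwr
      have hmn' : hasMinNorm (latticeOf b') 1 := by rw [hlat']; exact hmn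
      obtain ⟨hb0', hb1'⟩ := norms_one hli' hwr' hmn' hno'
      have hdet := det_sq_congr hli' hlat'
      rw [latMat_det_sq, latMat_det_sq, hb0, hb1, hb0', hb1'] at hdet
      have habs : |c| = 1/2 := by rw [← hmu]; exact h12
      have hc2 : c^2 = (1/2)^2 := by rw [← sq_abs, habs]
      have hc2' : ⟪b' 0, b' 1⟫^2 = (1/2)^2 := by rw [← hcdef] at hdet; nlinarith [hdet]
      rw [muB_two, hb0', hb1', abs_eq_half hc2']
      norm_num
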